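/- Let f : ℝⁿ → ℝ be L-smooth with lower bound f⋆, and let x^{k+1} = x^k - (√(4/3)/L)∇f(x^k) for k = 1,…,N. Then min_{1≤k≤N+1} ‖∇f(x^k)‖ ≤ ( 6√3·L·(f(x¹) - f⋆) / (8N + 3√3) )^{1/2}. -/

import Mathlib

open RealInnerProductSpace

section Aux

variable {E : Type*} [NormedAddCommGroup E] [InnerProductSpace ℝ E] [CompleteSpace E]

lemma curve_hasDerivAt (f : E → ℝ) (hf : Differentiable ℝ f) (c d : E) (t : ℝ) :
    HasDerivAt (fun t : ℝ => f (c + t • d)) ⟪gradient f (c + t • d), d⟫ t := by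
  have hγ : HasDerivAt (fun t : ℝ => c + t • d) d t := by
    simpa using ((hasDerivAt_id t).smul_const d).const_add c
  have hg := (hf (c + t • d)).hasGradientAt.hasFDerivAt
  have := hg.comp_hasDerivAt t hγ
  simp only [InnerProductSpace.toDual_apply_apply] at this
  exact this

lemma descent_upper (f : E → ℝ) (L : ℝ) (hL : 0 < L) (hf : Differentiable ℝ f)
    (hlip : ∀ x y, ‖gradient f x - gradient f y‖ ≤ L * ‖x - y‖) (c y : E) :
    f y ≤ f c + ⟪gradient f c, y - c⟫ + L / 2 * ‖y - c‖ ^ 2 := by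
  set d := y - c with hd
  set g : ℝ → ℝ := fun t => f (c + t • d) - t * ⟪gradient f c, d⟫ - L / 2 * t ^ 2 * ‖d‖ ^ 2
    with hgdef
  have key : AntitoneOn g (Set.Icc (0:ℝ) 1) := by
    apply antitoneOn_of_hasDerivWithinAt_nonpos (f' := fun t =>
        ⟪gradient f (c + t • d), d⟫ - ⟪gradient f c, d⟫ - L * t * ‖d‖ ^ 2)
        (convex_Icc 0 1)
    · have : Continuous g := by
        apply Continuous.sub
        apply Continuous.sub
        · exact hf.continuous.comp (by continuity)
        · continuity
        · continuity
      exact this.continuousOn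
    · intro t ht
      have h1 := curve_hasDerivAt f hf c d t
      have h2 : HasDerivAt (fun t : ℝ => t * ⟪gradient f c, d⟫) ⟪gradient f c, d⟫ t :=
        hasDerivAt_mul_const _
      have h3 : HasDerivAt (fun t : ℝ => L / 2 * t ^ 2 * ‖d‖ ^ 2) (L * t * ‖d‖ ^ 2) t := by
        have := ((hasDerivAt_pow 2 t).const_mul (L / 2)).mul_const (‖d‖ ^ 2)
        refine this.congr_deriv ?_
        ring
      exact ((h1.sub h2).sub h3).hasDerivWithinAt
    · intro t ht
      rw [interior_Icc] at ht
      have ht0 : 0 ≤ t := le_of_lt ht.1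
      have hinner : ⟪gradient f (c + t • d) - gradient f c, d⟫ ≤ L * t * ‖d‖ ^ 2 := by
        calc ⟪gradient f (c + t • d) - gradient f c, d⟫
            ≤ ‖gradient f (c + t • d) - gradient f c‖ * ‖d‖ := real_inner_le_norm _ _
          _ ≤ (L * ‖(c + t • d) - c‖) * ‖d‖ := by
              gcongr
              exact hlip _ _
          _ = L * t * ‖d‖ ^ 2 := by
              have : (c + t • d) - c = t • d := by abel
              rw [this, norm_smul, Real.norm_eq_abs, abs_of_nonneg ht0]
              ring
      rw [inner_sub_left] at hinner
      linarith
  have h01 := key (Set.mem_Icc.2 ⟨le_refl 0, zero_le_one⟩)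
    (Set.mem_Icc.2 ⟨zero_le_one, le_refl 1⟩) zero_le_one
  have hg0 : g 0 = f c := by simp [hgdef]
  have hg1 : g 1 = f y - ⟪gradient f c, d⟫ - L / 2 * ‖d‖ ^ 2 := by
    have h1d : c + d = y := by rw [hd]; abel
    simp [hgdef, h1d]
  rw [hg0, hg1] at h01
  linarith

lemma descent_lower (f : E → ℝ) (L : ℝ) (hL : 0 < L) (hf : Differentiable ℝ f)
    (hlip : ∀ x y, ‖gradient f x - gradient f y‖ ≤ L * ‖x - y‖) (c y : E) :
    f c + ⟪gradient f c, y - c⟫ - L / 2 * ‖y - c‖ ^ 2 ≤ f y := by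
  set d := y - c with hd
  set g : ℝ → ℝ := fun t => f (c + t • d) - t * ⟪gradient f c, d⟫ + L / 2 * t ^ 2 * ‖d‖ ^ 2
    with hgdef
  have key : MonotoneOn g (Set.Icc (0:ℝ) 1) := by
    apply monotoneOn_of_hasDerivWithinAt_nonneg (f' := fun t =>
        ⟪gradient f (c + t • d), d⟫ - ⟪gradient f c, d⟫ + L * t * ‖d‖ ^ 2)
        (convex_Icc 0 1)
    · have : Continuous g := by
        apply Continuous.add
        apply Continuous.sub
        · exact hf.continuous.comp (by continuity)
        · continuity
        · continuity
      exact this.continuousOn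
    · intro t ht
      have h1 := curve_hasDerivAt f hf c d t
      have h2 : HasDerivAt (fun t : ℝ => t * ⟪gradient f c, d⟫) ⟪gradient f c, d⟫ t :=
        hasDerivAt_mul_const _
      have h3 : HasDerivAt (fun t : ℝ => L / 2 * t ^ 2 * ‖d‖ ^ 2) (L * t * ‖d‖ ^ 2) t := by
        have := ((hasDerivAt_pow 2 t).const_mul (L / 2)).mul_const (‖d‖ ^ 2)
        refine this.congr_deriv ?_
        ring
      exact ((h1.sub h2).add h3).hasDerivWithinAt
    · intro t ht
      rw [interior_Icc] at ht
      have ht0 : 0 ≤ t := le_of_lt ht.1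
      have hinner : ⟪gradient f c - gradient f (c + t • d), d⟫ ≤ L * t * ‖d‖ ^ 2 := by
        calc ⟪gradient f c - gradient f (c + t • d), d⟫
            ≤ ‖gradient f c - gradient f (c + t • d)‖ * ‖d‖ := real_inner_le_norm _ _
          _ ≤ (L * ‖c - (c + t • d)‖) * ‖d‖ := by
              gcongr
              exact hlip _ _
          _ = L * t * ‖d‖ ^ 2 := by
              have : c - (c + t • d) = -(t • d) := by abel
              rw [this, norm_neg, norm_smul, Real.norm_eq_abs, abs_of_nonneg ht0]
              ring
      rw [inner_sub_left] at hinner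
      linarith
  have h01 := key (Set.mem_Icc.2 ⟨le_refl 0, zero_le_one⟩)
    (Set.mem_Icc.2 ⟨zero_le_one, le_refl 1⟩) zero_le_one
  have hg0 : g 0 = f c := by simp [hgdef]
  have hg1 : g 1 = f y - ⟪gradient f c, d⟫ + L / 2 * ‖d‖ ^ 2 := by
    have h1d : c + d = y := by rw [hd]; abel
    simp [hgdef, h1d]
  rw [hg0, hg1] at h01
  linarith

/-- Interpolation inequality for L-smooth (possibly nonconvex) functions. -/
lemma star_ineq (f : E → ℝ) (L : ℝ) (hL : 0 < L) (hf : Differentiable ℝ f)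
    (hlip : ∀ x y, ‖gradient f x - gradient f y‖ ≤ L * ‖x - y‖) (a b : E) :
    f a - f b ≤ 1 / 2 * ⟪gradient f a + gradient f b, a - b⟫ + L / 4 * ‖a - b‖ ^ 2
      - 1 / (4 * L) * ‖gradient f a - gradient f b‖ ^ 2 := by
  set u := gradient f a with hu
  set v := gradient f b with hv
  set z : E := (1 / 2 : ℝ) • (a + b) + (1 / (2 * L)) • (u - v) with hz
  have hza : z - a = (1 / (2 * L)) • (u - v) - (1 / 2 : ℝ) • (a - b) := by
    rw [hz]; module
  have hzb : z - b = (1 / (2 * L)) • (u - v) + (1 / 2 : ℝ) • (a - b) := by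
    rw [hz]; module
  have h1 := descent_lower f L hL hf hlip a z
  have h2 := descent_upper f L hL hf hlip b z
  rw [hza] at h1
  rw [hzb] at h2
  set w := u - v with hw
  set d := a - b with hd
  have hL0 : L ≠ 0 := ne_of_gt hL
  have e1 : ‖(1 / (2 * L)) • w - (1 / 2 : ℝ) • d‖ ^ 2
      = (1 / (2 * L)) ^ 2 * ‖w‖ ^ 2 - 2 * (1 / (2 * L)) * (1 / 2) * ⟪w, d⟫
        + (1 / 2 : ℝ) ^ 2 * ‖d‖ ^ 2 := by
    rw [norm_sub_sq_real]
    simp only [norm_smul, Real.norm_eq_abs, real_inner_smul_left, real_inner_smul_right,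
      mul_pow, sq_abs]
    ring
  have e2 : ‖(1 / (2 * L)) • w + (1 / 2 : ℝ) • d‖ ^ 2
      = (1 / (2 * L)) ^ 2 * ‖w‖ ^ 2 + 2 * (1 / (2 * L)) * (1 / 2) * ⟪w, d⟫
        + (1 / 2 : ℝ) ^ 2 * ‖d‖ ^ 2 := by
    rw [norm_add_sq_real]
    simp only [norm_smul, Real.norm_eq_abs, real_inner_smul_left, real_inner_smul_right,
      mul_pow, sq_abs]
    ring
  have e3 : ⟪u, (1 / (2 * L)) • w - (1 / 2 : ℝ) • d⟫
      = (1 / (2 * L)) * ⟪u, w⟫ - (1 / 2) * ⟪u, d⟫ := by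
    rw [inner_sub_right, real_inner_smul_right, real_inner_smul_right]
  have e4 : ⟪v, (1 / (2 * L)) • w + (1 / 2 : ℝ) • d⟫
      = (1 / (2 * L)) * ⟪v, w⟫ - (1 / (2 * L)) * ⟪w, d⟫ * 0 + (1 / 2) * ⟪v, d⟫ := by
    rw [inner_add_right, real_inner_smul_right, real_inner_smul_right]
    ring
  have e5 : ⟪u, w⟫ - ⟪v, w⟫ = ‖w‖ ^ 2 := by
    rw [← inner_sub_left, ← hw, real_inner_self_eq_norm_sq]
  have e6 : ⟪u + v, d⟫ = ⟪u, d⟫ + ⟪v, d⟫ := inner_add_left _ _ _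
  rw [e1, e3] at h1
  rw [e2, e4] at h2
  rw [e6]
  set μ : ℝ := 1 / (2 * L) with hμ
  set W : ℝ := ‖w‖ ^ 2 with hWdef
  set D : ℝ := ‖d‖ ^ 2 with hDdef
  set X : ℝ := ⟪w, d⟫ with hX
  set Uw : ℝ := ⟪u, w⟫ with hUw
  set Vw : ℝ := ⟪v, w⟫ with hVw
  set Ud : ℝ := ⟪u, d⟫ with hUd
  set Vd : ℝ := ⟪v, d⟫ with hVd
  have hcomb : f a - f b ≤ μ * Vw - μ * Uw + 1 / 2 * (Ud + Vd) + L * μ ^ 2 * W + L / 4 * D := by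
    linarith [h1, h2]
  have hVU : μ * Vw - μ * Uw = -(μ * W) := by linear_combination (-μ) * e5
  have hWc : -(μ * W) + L * μ ^ 2 * W = -(1 / (4 * L)) * W := by
    rw [hμ]; field_simp; ring
  linarith [hcomb, hVU, hWc]

end Aux

set_option maxHeartbeats 1000000 in
theorem stmt_9 {n : ℕ} (f : EuclideanSpace ℝ (Fin n) → ℝ) (L : ℝ) (hL : 0 < L)
    (hf : Differentiable ℝ f)
    (hlip : ∀ x y, ‖gradient f x - gradient f y‖ ≤ L * ‖x - y‖)
    (fstar : ℝ) (hlow : ∀ y, fstar ≤ f y)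
    (N : ℕ) (hN : 1 ≤ N)
    (x : ℕ → EuclideanSpace ℝ (Fin n))
    (hupd : ∀ k, 1 ≤ k → k ≤ N →
      x (k + 1) = x k - (Real.sqrt (4 / 3) / L) • gradient f (x k)) :
    ∃ k ∈ Finset.Icc 1 (N + 1),
      ‖gradient f (x k)‖ ≤
        Real.sqrt (6 * Real.sqrt 3 * L * (f (x 1) - fstar) / (8 * N + 3 * Real.sqrt 3)) := by
  set s : ℝ := Real.sqrt (4 / 3) with hs
  have hs2 : s ^ 2 = 4 / 3 := Real.sq_sqrt (by norm_num)
  have hs1 : 1 ≤ s := by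
    rw [hs, show (1:ℝ) = Real.sqrt 1 by rw [Real.sqrt_one]]
    exact Real.sqrt_le_sqrt (by norm_num)
  have hs0 : 0 < s := lt_of_lt_of_le one_pos hs1
  have hL0 : L ≠ 0 := ne_of_gt hL
  set t : ℝ := s / L with ht
  have ht0 : 0 ≤ t := by positivity
  -- the minimizing index
  obtain ⟨k₀, hk₀mem, hk₀min⟩ := Finset.exists_min_image (Finset.Icc 1 (N + 1))
    (fun k => ‖gradient f (x k)‖) ⟨1, Finset.mem_Icc.2 ⟨le_refl 1, by omega⟩⟩
  set m : ℝ := ‖gradient f (x k₀)‖ with hm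
  have hm0 : 0 ≤ m := norm_nonneg _
  have hmin : ∀ j : ℕ, 1 ≤ j → j ≤ N + 1 → m ^ 2 ≤ ‖gradient f (x j)‖ ^ 2 := by
    intro j h1 h2
    have := hk₀min j (Finset.mem_Icc.2 ⟨h1, h2⟩)
    exact pow_le_pow_left₀ hm0 this 2
  -- per-step decrease
  have step : ∀ j : ℕ, 1 ≤ j → j ≤ N →
      5 * s / (12 * L) * ‖gradient f (x j)‖ ^ 2
        + s / (4 * L) * ‖gradient f (x (j + 1))‖ ^ 2
        ≤ f (x j) - f (x (j + 1)) := by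
    intro j hj1 hjN
    set u := gradient f (x j) with hu
    set v := gradient f (x (j + 1)) with hv
    set A := ‖u‖ ^ 2 with hA
    set B := ‖v‖ ^ 2 with hB
    set W := ‖u - v‖ ^ 2 with hW
    set p : ℝ := ⟪u, v⟫ with hp
    have hA0 : 0 ≤ A := sq_nonneg _
    have hB0 : 0 ≤ B := sq_nonneg _
    have hxx : x (j + 1) - x j = -(t • u) := by
      rw [hupd j hj1 hjN]; abel
    have hstar := star_ineq f L hL hf hlip (x (j + 1)) (x j)
    rw [← hu, ← hv, hxx] at hstar
    have e1 : ⟪v + u, -(t • u)⟫ = -(t * (A + p)) := by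
      rw [inner_neg_right, real_inner_smul_right, inner_add_left]
      rw [real_inner_comm u v, real_inner_self_eq_norm_sq]
      ring
    have e2 : ‖-(t • u)‖ ^ 2 = t ^ 2 * A := by
      rw [norm_neg, norm_smul, Real.norm_eq_abs, mul_pow, sq_abs]
    have e3 : ‖v - u‖ ^ 2 = W := by rw [norm_sub_rev]
    rw [e1, e2, e3] at hstar
    -- Lipschitz bound on W
    have hWA : W ≤ 4 / 3 * A := by
      have h := hlip (x j) (x (j + 1))
      rw [← hu, ← hv] at h
      have hnorm : ‖x j - x (j + 1)‖ = t * ‖u‖ := by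
        have hxd : x j - x (j + 1) = t • u := by rw [hupd j hj1 hjN]; abel
        rw [hxd, norm_smul, Real.norm_eq_abs, abs_of_nonneg ht0]
      rw [hnorm] at h
      have hLts : L * (t * ‖u‖) = s * ‖u‖ := by rw [ht]; field_simp
      rw [hLts] at h
      have hsq : ‖u - v‖ ^ 2 ≤ (s * ‖u‖) ^ 2 := pow_le_pow_left₀ (norm_nonneg _) h 2
      have he : (s * ‖u‖) ^ 2 = 4 / 3 * A := by rw [mul_pow, hs2, hA]
      rw [hW]
      rw [he] at hsq
      exact hsq
    -- the norm expansion
    have hWeq : W = A - 2 * p + B := by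
      rw [hW, norm_sub_sq_real, hA, hB, hp]
    -- t^2 term
    have ht2 : L / 4 * (t ^ 2 * A) = 1 / (3 * L) * A := by
      have ht2' : t ^ 2 = 4 / (3 * L ^ 2) := by
        rw [ht, div_pow, hs2]; ring
      rw [ht2']; field_simp
    rw [ht2] at hstar
    have htA : t * (A + p) = s / L * (A + p) := by rw [ht]
    rw [htA] at hstar
    -- combine: hstar : f(x(j+1)) - f(x j) ≤ 1/2 * (-(s/L*(A+p))) + 1/(3L)*A - 1/(4L)*W
    have hcomb : 0 ≤ (s - 1) / (4 * L) * (4 / 3 * A - W) := by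
      apply mul_nonneg (div_nonneg (by linarith) (by positivity))
      linarith
    have hident : 1 / 2 * (s / L * (A + p)) - 1 / (3 * L) * A + 1 / (4 * L) * W
        - (5 * s / (12 * L) * A + s / (4 * L) * B)
        = (s - 1) / (4 * L) * (4 / 3 * A - W) := by
      have hpeq : p = (A + B - W) / 2 := by linarith
      rw [hpeq]
      field_simp
      ring
    linarith [hstar, hcomb, hident]
  -- telescoping
  have claim : ∀ j : ℕ, 1 ≤ j → j ≤ N + 1 →
      f (x j) + ((j : ℝ) - 1) * (2 * s / (3 * L) * m ^ 2) ≤ f (x 1) := by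
    intro j hj1
    induction j, hj1 using Nat.le_induction with
    | base => intro _; simp
    | succ j hj1 ih =>
      intro hjN1
      have hjN : j ≤ N := by omega
      have hih := ih (by omega)
      have hstep := step j hj1 hjN
      have hAm := hmin j hj1 (by omega)
      have hBm := hmin (j + 1) (by omega) (by omega)
      have hc1 : 0 ≤ 5 * s / (12 * L) := by positivity
      have hc2 : 0 ≤ s / (4 * L) := by positivity
      have h1 : 5 * s / (12 * L) * m ^ 2 ≤ 5 * s / (12 * L) * ‖gradient f (x j)‖ ^ 2 :=
        mul_le_mul_of_nonneg_left hAm hc1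
      have h2 : s / (4 * L) * m ^ 2 ≤ s / (4 * L) * ‖gradient f (x (j + 1))‖ ^ 2 :=
        mul_le_mul_of_nonneg_left hBm hc2
      have hsum : 2 * s / (3 * L) * m ^ 2
          = 5 * s / (12 * L) * m ^ 2 + s / (4 * L) * m ^ 2 := by
        field_simp
        ring
      push_cast
      have : f (x (j + 1)) + 2 * s / (3 * L) * m ^ 2 ≤ f (x j) := by
        rw [hsum]; linarith
      linarith
  have hNfin := claim (N + 1) (by omega) (le_refl _)
  -- last point bound
  have hlast : fstar + 1 / (2 * L) * ‖gradient f (x (N + 1))‖ ^ 2 ≤ f (x (N + 1)) := by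
    set c := x (N + 1) with hc
    set g := gradient f c with hg
    have hdesc := descent_upper f L hL hf hlip c (c - (1 / L) • g)
    have e1 : c - (1 / L) • g - c = -((1 / L) • g) := by abel
    rw [e1] at hdesc
    have e2 : ⟪g, -((1/L) • g)⟫ = -(1 / L * ‖g‖ ^ 2) := by
      rw [inner_neg_right, real_inner_smul_right, real_inner_self_eq_norm_sq]
    have e3 : ‖-((1/L) • g)‖ ^ 2 = (1 / L) ^ 2 * ‖g‖ ^ 2 := by
      rw [norm_neg, norm_smul, Real.norm_eq_abs, mul_pow, sq_abs]
    rw [e2, e3] at hdesc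
    have hlow' := hlow (c - (1 / L) • g)
    have : L / 2 * ((1 / L) ^ 2 * ‖g‖ ^ 2) = 1 / (2 * L) * ‖g‖ ^ 2 := by
      field_simp
    rw [this] at hdesc
    have h2g : 1 / L * ‖g‖ ^ 2 = 2 * (1 / (2 * L) * ‖g‖ ^ 2) := by
      field_simp
    linarith
  have hmlast : m ^ 2 ≤ ‖gradient f (x (N + 1))‖ ^ 2 := hmin (N + 1) (by omega) (le_refl _)
  -- combine everything: fstar + (N * 2s/(3L) + 1/(2L)) m^2 ≤ f (x 1)
  have hmain : m ^ 2 * (4 * s * N + 3) ≤ 6 * L * (f (x 1) - fstar) := by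
    have h1 : fstar + 1 / (2 * L) * m ^ 2 + (N : ℝ) * (2 * s / (3 * L) * m ^ 2) ≤ f (x 1) := by
      have : ((N : ℝ) + 1 - 1) = (N : ℝ) := by ring
      push_cast at hNfin
      rw [this] at hNfin
      have := mul_le_mul_of_nonneg_left hmlast (by positivity : (0:ℝ) ≤ 1 / (2 * L))
      linarith
    have h2 : (fstar + 1 / (2 * L) * m ^ 2 + (N : ℝ) * (2 * s / (3 * L) * m ^ 2)) * (6 * L)
        ≤ f (x 1) * (6 * L) := by
      apply mul_le_mul_of_nonneg_right h1 (by positivity)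
    have h3 : (fstar + 1 / (2 * L) * m ^ 2 + (N : ℝ) * (2 * s / (3 * L) * m ^ 2)) * (6 * L)
        = fstar * (6 * L) + m ^ 2 * (4 * s * N + 3) := by
      field_simp
      ring
    rw [h3] at h2
    linarith
  -- convert to the target form
  have h3pos : (0:ℝ) < Real.sqrt 3 := Real.sqrt_pos.2 (by norm_num)
  have hs3 : s * Real.sqrt 3 = 2 := by
    rw [hs, ← Real.sqrt_mul (by norm_num : (0:ℝ) ≤ 4/3)]
    rw [show (4:ℝ)/3 * 3 = 4 by norm_num]
    rw [show (4:ℝ) = 2 ^ 2 by norm_num]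
    exact Real.sqrt_sq (by norm_num)
  have hden : (0:ℝ) < 8 * (N:ℝ) + 3 * Real.sqrt 3 := by positivity
  refine ⟨k₀, hk₀mem, ?_⟩
  apply Real.le_sqrt_of_sq_le
  rw [le_div_iff₀ hden]
  have key : m ^ 2 * (8 * (N:ℝ) + 3 * Real.sqrt 3)
      = m ^ 2 * (4 * s * N + 3) * Real.sqrt 3 := by
    have hexp : (8 : ℝ) * (N:ℝ) = 4 * (s * Real.sqrt 3) * N := by rw [hs3]; ring
    rw [hexp]; ring
  calc m ^ 2 * (8 * (N:ℝ) + 3 * Real.sqrt 3)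
      = m ^ 2 * (4 * s * N + 3) * Real.sqrt 3 := key
    _ ≤ 6 * L * (f (x 1) - fstar) * Real.sqrt 3 :=
        mul_le_mul_of_nonneg_right hmain (le_of_lt h3pos)
    _ = 6 * Real.sqrt 3 * L * (f (x 1) - fstar) := by ring
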